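/- Let a < b be real numbers and let M > 0 and c > 0 be constants. Then there exists a constant δ > 0, depending only on a, b, M, c, such that every continuous function f : [a,b] → ℝ satisfying f(x) < 0 for all x, |f(x) − f(y)| ≤ M|x − y| for all x, y ∈ [a,b], and ∫_a^b (−1/f(x)) dx ≤ c, satisfies f(x) ≤ −δ for all x ∈ [a,b]. -/

import Mathlib

open Real Set intervalIntegral

lemma integral_affine_left (M ε u L : ℝ) (hM : 0 < M) (hε : 0 < ε) (hL : 0 < L) :
    ∫ t in u..(u+L), 1/(ε + M*(t-u)) = (1/M) * Real.log ((ε + M*L)/ε) := by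
  have huIcc : Set.uIcc u (u+L) = Set.Icc u (u+L) := Set.uIcc_of_le (by linarith)
  have hden : ∀ t ∈ Set.uIcc u (u+L), 0 < ε + M*(t-u) := by
    intro t ht
    rw [huIcc] at ht
    nlinarith [ht.1]
  have hderiv : ∀ t ∈ Set.uIcc u (u+L),
      HasDerivAt (fun t => (1/M) * Real.log (ε + M*(t-u))) (1/(ε + M*(t-u))) t := by
    intro t ht
    have h1 : HasDerivAt (fun t => ε + M*(t-u)) M t := by
      simpa using (((hasDerivAt_id t).sub_const u).const_mul M).const_add ε
    have h2 := (h1.log (hden t ht).ne').const_mul (1/M)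
    refine h2.congr_deriv ?_
    have := (hden t ht).ne'
    field_simp
  have hcont : ContinuousOn (fun t => 1/(ε + M*(t-u))) (Set.uIcc u (u+L)) := by
    apply ContinuousOn.div continuousOn_const (by fun_prop)
    intro t ht; exact (hden t ht).ne'
  rw [intervalIntegral.integral_eq_sub_of_hasDerivAt hderiv hcont.intervalIntegrable]
  have h1 : u + L - u = L := by ring
  have h2 : ε + M * (u - u) = ε := by ring
  rw [h1, h2, ← mul_sub, ← Real.log_div (by positivity) hε.ne']

lemma integral_affine_right (M ε v L : ℝ) (hM : 0 < M) (hε : 0 < ε) (hL : 0 < L) :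
    ∫ t in (v-L)..v, 1/(ε + M*(v-t)) = (1/M) * Real.log ((ε + M*L)/ε) := by
  have huIcc : Set.uIcc (v-L) v = Set.Icc (v-L) v := Set.uIcc_of_le (by linarith)
  have hden : ∀ t ∈ Set.uIcc (v-L) v, 0 < ε + M*(v-t) := by
    intro t ht
    rw [huIcc] at ht
    nlinarith [ht.2]
  have hderiv : ∀ t ∈ Set.uIcc (v-L) v,
      HasDerivAt (fun t => -(1/M) * Real.log (ε + M*(v-t))) (1/(ε + M*(v-t))) t := by
    intro t ht
    have h1 : HasDerivAt (fun t => ε + M*(v-t)) (-M) t := by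
      have := (((hasDerivAt_id t).const_sub v).const_mul M).const_add ε
      simpa [mul_comm] using this
    have h2 := (h1.log (hden t ht).ne').const_mul (-(1/M))
    refine h2.congr_deriv ?_
    have := (hden t ht).ne'
    field_simp
  have hcont : ContinuousOn (fun t => 1/(ε + M*(v-t))) (Set.uIcc (v-L) v) := by
    apply ContinuousOn.div continuousOn_const (by fun_prop)
    intro t ht; exact (hden t ht).ne'
  rw [intervalIntegral.integral_eq_sub_of_hasDerivAt hderiv hcont.intervalIntegrable]
  have h1 : ε + M * (v - v) = ε := by ring
  have h2 : v - (v - L) = L := by ring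
  rw [h1, h2, show -(1/M) * Real.log ε - -(1/M) * Real.log (ε+M*L)
    = (1/M) * (Real.log (ε+M*L) - Real.log ε) by ring,
    ← Real.log_div (by positivity) hε.ne']

/-- **Uniform negativity**: a negative `M`-Lipschitz continuous function on `[a,b]`
whose reciprocal has integral bounded by `c` is uniformly bounded away from zero,
with a bound depending only on `a`, `b`, `M`, `c`. -/
theorem uniform_negativity (a b M c : ℝ) (hab : a < b) (hM : 0 < M) (hc : 0 < c) :
    ∃ δ > 0, ∀ f : ℝ → ℝ,
      ContinuousOn f (Set.Icc a b) →
      (∀ x ∈ Set.Icc a b, f x < 0) →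
      (∀ x ∈ Set.Icc a b, ∀ y ∈ Set.Icc a b, |f x - f y| ≤ M * |x - y|) →
      (∫ x in a..b, -1 / f x) ≤ c →
      ∀ x ∈ Set.Icc a b, f x ≤ -δ := by
  set L : ℝ := (b - a) / 2 with hLdef
  have hL : 0 < L := by rw [hLdef]; linarith
  set E : ℝ := Real.exp (M * c) - 1 with hEdef
  have hexp : (1:ℝ) < Real.exp (M * c) := by
    rw [← Real.exp_zero]; exact Real.exp_lt_exp.mpr (by positivity)
  have hE : 0 < E := by rw [hEdef]; linarith
  refine ⟨M * L / E, by positivity, ?_⟩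
  intro f hf hneg hlip hint x₀ hx₀
  by_contra h
  push_neg at h
  set ε : ℝ := -f x₀ with hεdef
  have hε : 0 < ε := by rw [hεdef]; linarith [hneg x₀ hx₀]
  have hεδ : ε < M * L / E := by rw [hεdef]; linarith
  -- integrand continuous and nonneg on [a,b]
  have hcontInv : ContinuousOn (fun t => -1 / f t) (Set.Icc a b) := by
    apply ContinuousOn.div continuousOn_const hf
    intro t ht; exact (hneg t ht).ne
  have hnonneg : ∀ t ∈ Set.Icc a b, 0 ≤ -1 / f t := by
    intro t ht
    have := hneg t ht
    rw [div_nonneg_iff]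
    right
    constructor <;> linarith
  have hII : ∀ u v : ℝ, u ∈ Set.Icc a b → v ∈ Set.Icc a b →
      IntervalIntegrable (fun t => -1 / f t) MeasureTheory.volume u v := by
    intro u v hu hv
    exact (hcontInv.mono (Set.uIcc_subset_Icc hu hv)).intervalIntegrable
  have hsplit : ∀ u v : ℝ, u ∈ Set.Icc a b → v ∈ Set.Icc a b → u ≤ v →
      (∫ t in u..v, -1 / f t) ≤ ∫ t in a..b, -1 / f t := by
    intro u v hu hv huv
    have e1 : (∫ t in a..u, -1/f t) + (∫ t in u..v, -1/f t) = ∫ t in a..v, -1/f t :=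
      intervalIntegral.integral_add_adjacent_intervals (hII a u (Set.left_mem_Icc.mpr hab.le) hu)
        (hII u v hu hv)
    have e2 : (∫ t in a..v, -1/f t) + (∫ t in v..b, -1/f t) = ∫ t in a..b, -1/f t :=
      intervalIntegral.integral_add_adjacent_intervals (hII a v (Set.left_mem_Icc.mpr hab.le) hv)
        (hII v b hv (Set.right_mem_Icc.mpr hab.le))
    have n1 : 0 ≤ ∫ t in a..u, -1/f t :=
      intervalIntegral.integral_nonneg hu.1 (fun t ht => hnonneg t ⟨ht.1, ht.2.trans hu.2⟩)
    have n2 : 0 ≤ ∫ t in v..b, -1/f t :=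
      intervalIntegral.integral_nonneg hv.2 (fun t ht => hnonneg t ⟨hv.1.trans ht.1, ht.2⟩)
    linarith
  -- key integral lower bound
  have key : (1/M) * Real.log ((ε + M*L)/ε) ≤ ∫ x in a..b, -1 / f x := by
    rcases le_or_gt x₀ ((a+b)/2) with hx | hx
    · -- use [x₀, x₀+L] ⊆ [a,b]
      have hsub : Set.Icc x₀ (x₀ + L) ⊆ Set.Icc a b := by
        apply Set.Icc_subset_Icc hx₀.1
        rw [hLdef]; linarith
      have hx₀L : x₀ + L ∈ Set.Icc a b := hsub ⟨by linarith, le_refl _⟩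
      have hmono : ∀ t ∈ Set.Icc x₀ (x₀+L), 1/(ε + M*(t-x₀)) ≤ -1 / f t := by
        intro t ht
        have htab : t ∈ Set.Icc a b := hsub ht
        have hft : f t < 0 := hneg t htab
        have hlb : -f t ≤ ε + M*(t-x₀) := by
          have hl := hlip x₀ hx₀ t htab
          rw [abs_of_nonpos (by linarith [ht.1] : x₀ - t ≤ 0)] at hl
          have h3 := le_abs_self (f x₀ - f t)
          have h4 : ε = -f x₀ := hεdef
          linarith
        have h1 : -1 / f t = 1 / (-f t) := by rw [neg_div, ← one_div_neg_eq_neg_one_div]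
        rw [h1]
        exact one_div_le_one_div_of_le (by linarith) hlb
      have hden : ∀ t ∈ Set.Icc x₀ (x₀+L), 0 < ε + M*(t-x₀) := by
        intro t ht; nlinarith [ht.1]
      have hcont2 : ContinuousOn (fun t => 1/(ε + M*(t-x₀))) (Set.uIcc x₀ (x₀+L)) := by
        rw [Set.uIcc_of_le (by linarith)]
        apply ContinuousOn.div continuousOn_const (by fun_prop)
        intro t ht; exact (hden t ht).ne'
      have hmono' : (∫ t in x₀..(x₀+L), 1/(ε + M*(t-x₀))) ≤ ∫ t in x₀..(x₀+L), -1/f t := by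
        apply intervalIntegral.integral_mono_on (by linarith) hcont2.intervalIntegrable
          (hII x₀ (x₀+L) hx₀ hx₀L) hmono
      rw [integral_affine_left M ε x₀ L hM hε hL] at hmono'
      exact hmono'.trans (hsplit x₀ (x₀+L) hx₀ hx₀L (by linarith))
    · -- use [x₀-L, x₀] ⊆ [a,b]
      have hsub : Set.Icc (x₀ - L) x₀ ⊆ Set.Icc a b := by
        apply Set.Icc_subset_Icc _ hx₀.2
        rw [hLdef]; linarith
      have hx₀L : x₀ - L ∈ Set.Icc a b := hsub ⟨le_refl _, by linarith⟩
      have hmono : ∀ t ∈ Set.Icc (x₀-L) x₀, 1/(ε + M*(x₀-t)) ≤ -1 / f t := by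
        intro t ht
        have htab : t ∈ Set.Icc a b := hsub ht
        have hft : f t < 0 := hneg t htab
        have hlb : -f t ≤ ε + M*(x₀-t) := by
          have hl := hlip x₀ hx₀ t htab
          rw [abs_of_nonneg (by linarith [ht.2] : 0 ≤ x₀ - t)] at hl
          have h3 := le_abs_self (f x₀ - f t)
          have h4 : ε = -f x₀ := hεdef
          linarith
        have h1 : -1 / f t = 1 / (-f t) := by rw [neg_div, ← one_div_neg_eq_neg_one_div]
        rw [h1]
        exact one_div_le_one_div_of_le (by linarith) hlb
      have hden : ∀ t ∈ Set.Icc (x₀-L) x₀, 0 < ε + M*(x₀-t) := by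
        intro t ht; nlinarith [ht.2]
      have hcont2 : ContinuousOn (fun t => 1/(ε + M*(x₀-t))) (Set.uIcc (x₀-L) x₀) := by
        rw [Set.uIcc_of_le (by linarith)]
        apply ContinuousOn.div continuousOn_const (by fun_prop)
        intro t ht; exact (hden t ht).ne'
      have hmono' : (∫ t in (x₀-L)..x₀, 1/(ε + M*(x₀-t))) ≤ ∫ t in (x₀-L)..x₀, -1/f t := by
        apply intervalIntegral.integral_mono_on (by linarith) hcont2.intervalIntegrable
          (hII (x₀-L) x₀ hx₀L hx₀) hmono
      rw [integral_affine_right M ε x₀ L hM hε hL] at hmono'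
      exact hmono'.trans (hsplit (x₀-L) x₀ hx₀L hx₀ (by linarith))
  -- conclude
  have hpos : 0 < (ε + M*L)/ε := by positivity
  have hlog : Real.log ((ε + M*L)/ε) ≤ M * c := by
    have h2 : (1/M) * Real.log ((ε + M*L)/ε) ≤ c := key.trans hint
    calc Real.log ((ε + M*L)/ε) = M * ((1/M) * Real.log ((ε + M*L)/ε)) := by
          field_simp
      _ ≤ M * c := by nlinarith
  have hle : (ε + M*L)/ε ≤ Real.exp (M*c) := by
    rw [← Real.exp_log hpos]
    exact Real.exp_le_exp.mpr hlog
  rw [div_le_iff₀ hε] at hle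
  have h1 : M * L ≤ ε * E := by rw [hEdef]; nlinarith
  have h2 : ε * E < M * L := (lt_div_iff₀ hE).mp hεδ
  linarith
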